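/- Let G be the spinal graph over Σ = ℕ obtained by gluing, at each n ∈ ℕ, the ball B_{P_n}(o_n, n^α) of a graph P_n satisfying c r^δ ≤ |B_{P_n}(x,r)| ≤ C r^δ (constants uniform in n), where δ > D > 1 and α = (D−1)/δ. Then for all n ∈ ℕ and all integers r ≥ 2, |B_G(n, r)| ≥ c' r^D for some constant c' > 0 independent of n and r. -/

import Mathlib

/-- The closed combinatorial ball of (real) radius `r` around `x`. -/
def gball {V : Type*} (G : SimpleGraph V) (x : V) (r : ℝ) : Set V :=
  {y | (G.dist x y : ℝ) ≤ r}

/-- The vertices of the fibre glued at `n ∈ ℕ`: the ball `B_{P n}(o n, n ^ α)`. -/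
def FibVert {W : ℕ → Type*} (P : ∀ n, SimpleGraph (W n)) (o : ∀ n, W n) (α : ℝ)
    (n : ℕ) : Type _ :=
  {z : W n // ((P n).dist (o n) z : ℝ) ≤ (n : ℝ) ^ α}

/-- The spinal graph over `Σ = ℕ` obtained by gluing, at each `n ∈ ℕ`, the induced
subgraph of `P n` on the ball `B_{P n}(o n, n ^ α)` to the vertex `n` of the path
graph `ℕ` at the distinguished point `o n`. -/
def SpineGlued {W : ℕ → Type*} (P : ∀ n, SimpleGraph (W n)) (o : ∀ n, W n) (α : ℝ) :
    SimpleGraph (Σ n, FibVert P o α n) :=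
  SimpleGraph.fromRel (fun p q =>
    (∃ h : p.1 = q.1, (P q.1).Adj (h ▸ p.2.1) q.2.1) ∨
    (p.2.1 = o p.1 ∧ q.2.1 = o q.1 ∧ q.1 = p.1 + 1))

section Aux
variable {W : ℕ → Type*} (P : ∀ n, SimpleGraph (W n)) (o : ∀ n, W n) (α : ℝ)

/-- The distinguished spine vertex over `m`. -/
def spV (m : ℕ) : Σ n, FibVert P o α n :=
  ⟨m, ⟨o m, by simp [SimpleGraph.dist_self]; positivity⟩⟩

lemma adj_spine (m : ℕ) :
    (SpineGlued P o α).Adj (spV P o α m) (spV P o α (m + 1)) := by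
  rw [SpineGlued, SimpleGraph.fromRel_adj]
  refine ⟨?_, Or.inl (Or.inr ⟨rfl, rfl, rfl⟩)⟩
  intro h
  have := congrArg Sigma.fst h
  simp [spV] at this

lemma adj_fib {m : ℕ} {z z' : FibVert P o α m} (h : (P m).Adj z.1 z'.1) :
    (SpineGlued P o α).Adj ⟨m, z⟩ ⟨m, z'⟩ := by
  rw [SpineGlued, SimpleGraph.fromRel_adj]
  refine ⟨?_, Or.inl (Or.inl ⟨rfl, h⟩)⟩
  intro he
  have h2 : z = z' := by
    have := (Sigma.mk.inj_iff.mp he).2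
    exact eq_of_heq this
  exact h.ne (by rw [h2])

lemma walk_spine (n k : ℕ) :
    ∃ w : (SpineGlued P o α).Walk (spV P o α n) (spV P o α (n + k)), w.length = k := by
  induction k with
  | zero => exact ⟨SimpleGraph.Walk.nil, rfl⟩
  | succ k ih =>
    obtain ⟨w, hw⟩ := ih
    exact ⟨w.concat (adj_spine P o α (n + k)),
      by rw [SimpleGraph.Walk.length_concat, hw]⟩

end Aux

section Aux2
variable {W : ℕ → Type*} (P : ∀ n, SimpleGraph (W n)) (o : ∀ n, W n) (α : ℝ)
variable (hconn : ∀ n, (P n).Connected)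
include hconn

lemma walk_fib {m : ℕ} : ∀ d (z : FibVert P o α m), (P m).dist (o m) z.1 ≤ d →
    ∃ w : (SpineGlued P o α).Walk (spV P o α m) ⟨m, z⟩, w.length ≤ d := by
  intro d
  induction d with
  | zero =>
    intro z hz
    have h0 : (P m).dist (o m) z.1 = 0 := Nat.le_zero.mp hz
    have hzo : o m = z.1 := ((hconn m).dist_eq_zero_iff).mp h0
    have hz2 : spV P o α m = (⟨m, z⟩ : Σ n, FibVert P o α n) := by
      obtain ⟨zv, zp⟩ := z
      simp only [spV]
      congr 1
      exact Subtype.ext hzo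
    exact ⟨SimpleGraph.Walk.nil.copy rfl hz2, by simp⟩
  | succ d ih =>
    intro z hz
    rcases Nat.lt_or_ge ((P m).dist (o m) z.1) (d + 1) with h | h
    · obtain ⟨w, hwl⟩ := ih z (Nat.lt_succ_iff.mp h)
      exact ⟨w, le_trans hwl (Nat.le_succ d)⟩
    · have hd : (P m).dist (o m) z.1 = d + 1 := le_antisymm hz h
      obtain ⟨w, hw⟩ := (hconn m).exists_walk_length_eq_dist (o m) z.1
      have hne : z.1 ≠ o m := by
        intro he
        rw [he, SimpleGraph.dist_self] at hd
        exact absurd hd (by omega)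
      obtain ⟨y, hadj, q, hq⟩ := SimpleGraph.Walk.exists_eq_cons_of_ne hne w.reverse
      have hqlen : q.length = d := by
        have h1 := congrArg SimpleGraph.Walk.length hq
        rw [SimpleGraph.Walk.length_reverse, hw, hd,
          SimpleGraph.Walk.length_cons] at h1
        omega
      have hyd : (P m).dist (o m) y ≤ d := by
        have h2 := SimpleGraph.dist_le q.reverse
        rwa [SimpleGraph.Walk.length_reverse, hqlen] at h2
      have hyfib : ((P m).dist (o m) y : ℝ) ≤ (m : ℝ) ^ α := by
        refine le_trans ?_ z.2
        rw [hd]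
        exact_mod_cast le_trans hyd (Nat.le_succ d)
      obtain ⟨w', hw'⟩ := ih ⟨y, hyfib⟩ hyd
      refine ⟨w'.concat (adj_fib P o α (z := ⟨y, hyfib⟩) (z' := z) hadj.symm), ?_⟩
      rw [SimpleGraph.Walk.length_concat]
      omega

lemma dist_upper (n k : ℕ) (z : FibVert P o α (n + k)) :
    (SpineGlued P o α).dist (spV P o α n) ⟨n + k, z⟩ ≤ k + (P (n + k)).dist (o (n + k)) z.1 := by
  obtain ⟨w1, h1⟩ := walk_spine P o α n k
  obtain ⟨w2, h2⟩ := walk_fib P o α hconn ((P (n + k)).dist (o (n + k)) z.1) z le_rfl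
  have h3 := SimpleGraph.dist_le (w1.append w2)
  rw [SimpleGraph.Walk.length_append] at h3
  omega

lemma reach_spine (n m : ℕ) (z : FibVert P o α m) :
    (SpineGlued P o α).Reachable (spV P o α n) ⟨m, z⟩ := by
  have h1 : (SpineGlued P o α).Reachable (spV P o α n) (spV P o α m) := by
    rcases le_total n m with h | h
    · obtain ⟨k, rfl⟩ := Nat.exists_eq_add_of_le h
      exact SimpleGraph.Walk.reachable (walk_spine P o α n k).choose
    · obtain ⟨k, rfl⟩ := Nat.exists_eq_add_of_le h
      exact (SimpleGraph.Walk.reachable (walk_spine P o α m k).choose).symm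
  obtain ⟨w2, _⟩ := walk_fib P o α hconn ((P m).dist (o m) z.1) z le_rfl
  exact h1.trans ⟨w2⟩

omit hconn in
lemma proj_le {p q : Σ n, FibVert P o α n} (w : (SpineGlued P o α).Walk p q) :
    q.1 ≤ p.1 + w.length := by
  induction w with
  | nil => simp
  | @cons a b c h w ih =>
    have hx : b.1 ≤ a.1 + 1 := by
      rw [SpineGlued, SimpleGraph.fromRel_adj] at h
      rcases h.2 with (⟨he, _⟩ | ⟨_, _, he⟩) | (⟨he, _⟩ | ⟨_, _, he⟩) <;> omega
    rw [SimpleGraph.Walk.length_cons]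
    omega

end Aux2

section Aux3
variable {W : ℕ → Type*} (P : ∀ n, SimpleGraph (W n)) (o : ∀ n, W n) (α δ c : ℝ)
variable (hc : 0 < c)
variable (hvol : ∀ (n : ℕ) (x : W n) (r : ℕ), 1 ≤ r →
      c * (r : ℝ) ^ δ ≤ ((gball (P n) x r).ncard : ℝ))
include hc hvol

lemma gball_finite (m : ℕ) (x : W m) (r : ℕ) (hr : 1 ≤ r) :
    (gball (P m) x r).Finite := by
  by_contra h
  have h0 : (gball (P m) x r).ncard = 0 := Set.Infinite.ncard h
  have h1 := hvol m x r hr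
  rw [h0] at h1
  have h2 : (0 : ℝ) < c * (r : ℝ) ^ δ := by
    apply mul_pos hc
    apply Real.rpow_pos_of_pos
    exact_mod_cast hr
  simp at h1
  linarith

lemma fib_finite (m : ℕ) : Finite (FibVert P o α m) := by
  set t : ℕ := max 1 ⌈(m : ℝ) ^ α⌉₊ with ht
  have h1t : 1 ≤ t := le_max_left _ _
  have hfin := gball_finite P δ c hc hvol m (o m) t h1t
  have hsub : {z : W m | ((P m).dist (o m) z : ℝ) ≤ (m : ℝ) ^ α} ⊆ gball (P m) (o m) t := by
    intro z hz
    show ((P m).dist (o m) z : ℝ) ≤ (t : ℝ)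
    refine le_trans hz (le_trans (Nat.le_ceil _) ?_)
    have : (⌈(m : ℝ) ^ α⌉₊ : ℕ) ≤ t := le_max_right _ _
    exact_mod_cast this
  exact Set.Finite.to_subtype (hfin.subset hsub)

end Aux3

lemma key {W : ℕ → Type*} (P : ∀ n, SimpleGraph (W n)) (o : ∀ n, W n)
    (hconn : ∀ n, (P n).Connected)
    (δ D α : ℝ) (hD : 1 < D) (hδ : D < δ) (hα : α = (D - 1) / δ)
    (c : ℝ) (hc : 0 < c)
    (hvol1 : ∀ (m : ℕ) (x : W m) (r : ℕ), 1 ≤ r →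
      c * (r : ℝ) ^ δ ≤ ((gball (P m) x r).ncard : ℝ)) :
    ∀ (n : ℕ) (r : ℕ), 2 ≤ r →
      c / (8 * 2 ^ δ * 4 ^ (D - 1)) * (r : ℝ) ^ D ≤
        ((gball (SpineGlued P o α) (spV P o α n) (r : ℝ)).ncard : ℝ) := by
  have hδ0 : (0 : ℝ) < δ := by linarith
  have hα0 : 0 < α := by rw [hα]; exact div_pos (by linarith) hδ0
  have hα1 : α < 1 := by
    rw [hα, div_lt_one hδ0]; linarith
  have hαδ : α * δ = D - 1 := by rw [hα]; field_simp
  intro n r hr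
  haveI : DecidableEq ((m : ℕ) × FibVert P o α m) := Classical.decEq _
  haveI hFin : ∀ m, Finite (FibVert P o α m) := fun m => fib_finite P o α δ c hc hvol1 m
  set G := SpineGlued P o α with hG
  set ctr := spV P o α n with hctr
  -- the ball is finite
  have hBfin : (gball G ctr (r : ℝ)).Finite := by
    apply Set.Finite.subset (Set.Finite.biUnion (Set.finite_Iic (n + r))
      (fun m _ => Set.finite_range (Sigma.mk m)))
    intro p hp
    have hp' : (G.dist ctr p : ℝ) ≤ (r : ℝ) := hp
    have hd : G.dist ctr p ≤ r := by exact_mod_cast hp'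
    obtain ⟨w, hw⟩ := (reach_spine P o α hconn n p.1 p.2).exists_walk_length_eq_dist
    have hproj := proj_le P o α w
    rw [hw] at hproj
    have h5 : p.1 ≤ n + G.dist ctr ⟨p.1, p.2⟩ := hproj
    have h6 : G.dist ctr ⟨p.1, p.2⟩ = G.dist ctr p := rfl
    rw [h6] at h5
    have hmem : p.1 ∈ Set.Iic (n + r) := by
      simp only [Set.mem_Iic]; omega
    exact Set.mem_biUnion hmem ⟨p.2, rfl⟩
  set K := r / 2 with hK
  set K2 := r / 4 with hK2
  set ρ : ℕ → ℕ := fun k => ⌊(k : ℝ) ^ α⌋₊ with hρ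
  set FB := hBfin.toFinset with hFB
  set T : ℕ → Finset (Σ m, FibVert P o α m) := fun k => FB.filter (fun p => p.1 = n + k) with hT
  have hk_facts : ∀ k ∈ Finset.Ioc K2 K,
      c * ((r : ℝ) / 4) ^ (D - 1) / 2 ^ δ ≤ ((T k).card : ℝ) := by
    intro k hk
    rw [Finset.mem_Ioc] at hk
    have hk1 : 1 ≤ k := by omega
    have hk1R : (1 : ℝ) ≤ (k : ℝ) := by exact_mod_cast hk1
    have hxα : (1 : ℝ) ≤ (k : ℝ) ^ α := Real.one_le_rpow hk1R hα0.le
    have hρ1 : 1 ≤ ρ k := Nat.le_floor (by exact_mod_cast hxα)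
    have hρle : (ρ k : ℝ) ≤ (k : ℝ) ^ α := Nat.floor_le (by positivity)
    have hρk : ρ k ≤ k := by
      have h1 : (k : ℝ) ^ α ≤ (k : ℝ) := by
        calc (k : ℝ) ^ α ≤ (k : ℝ) ^ (1 : ℝ) :=
              Real.rpow_le_rpow_of_exponent_le hk1R hα1.le
          _ = (k : ℝ) := Real.rpow_one _
      exact_mod_cast le_trans hρle h1
    have hx2 : (k : ℝ) ^ α ≤ 2 * (ρ k : ℝ) := by
      have h1 : (k : ℝ) ^ α < (ρ k : ℝ) + 1 := Nat.lt_floor_add_one _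
      have h2 : (1 : ℝ) ≤ (ρ k : ℝ) := by exact_mod_cast hρ1
      linarith
    have hA := hvol1 (n + k) (o (n + k)) (ρ k) hρ1
    have hAfin := gball_finite P δ c hc hvol1 (n + k) (o (n + k)) (ρ k) hρ1
    have hfib : ∀ z ∈ gball (P (n + k)) (o (n + k)) (ρ k),
        ((P (n + k)).dist (o (n + k)) z : ℝ) ≤ ((n + k : ℕ) : ℝ) ^ α := by
      intro z hz
      refine le_trans hz (le_trans hρle ?_)
      exact Real.rpow_le_rpow (by positivity) (by exact_mod_cast Nat.le_add_left k n) hα0.le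
    have hcard : (gball (P (n + k)) (o (n + k)) (ρ k)).ncard ≤ (T k).card := by
      rw [Set.ncard_eq_toFinset_card _ hAfin]
      apply Finset.card_le_card_of_injOn (fun z =>
        if h : ((P (n + k)).dist (o (n + k)) z : ℝ) ≤ ((n + k : ℕ) : ℝ) ^ α
        then ⟨n + k, ⟨z, h⟩⟩ else spV P o α (n + k))
      · intro z hz
        rw [Finset.mem_coe, Set.Finite.mem_toFinset] at hz
        rw [Finset.mem_coe]
        dsimp only
        simp only [dif_pos (hfib z hz)]
        rw [hT, Finset.mem_filter]
        refine ⟨?_, rfl⟩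
        rw [hFB, Set.Finite.mem_toFinset]
        have hz2 : ((P (n + k)).dist (o (n + k)) z : ℝ) ≤ ((ρ k : ℕ) : ℝ) := hz
        have hdz : (P (n + k)).dist (o (n + k)) z ≤ ρ k := by exact_mod_cast hz2
        have hup := dist_upper P o α hconn n k ⟨z, hfib z hz⟩
        have hup' : G.dist ctr ⟨n + k, ⟨z, hfib z hz⟩⟩ ≤ k + (P (n + k)).dist (o (n + k)) z := hup
        have hdist : G.dist ctr ⟨n + k, ⟨z, hfib z hz⟩⟩ ≤ r := by omega
        show (G.dist ctr ⟨n + k, ⟨z, hfib z hz⟩⟩ : ℝ) ≤ (r : ℝ)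
        exact_mod_cast hdist
      · intro z hz z' hz' heq
        simp only [Finset.mem_coe, Set.Finite.mem_toFinset] at hz hz'
        dsimp only at heq
        rw [dif_pos (hfib z hz), dif_pos (hfib z' hz')] at heq
        have h2 := eq_of_heq (Sigma.mk.inj_iff.mp heq).2
        exact congrArg Subtype.val h2
    have hkr : (r : ℝ) / 4 ≤ (k : ℝ) := by
      have hnat : r ≤ 4 * k := by omega
      have : (r : ℝ) ≤ 4 * (k : ℝ) := by exact_mod_cast hnat
      linarith
    calc c * ((r : ℝ) / 4) ^ (D - 1) / 2 ^ δ
        ≤ c * (k : ℝ) ^ (D - 1) / 2 ^ δ := by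
          have h1 := Real.rpow_le_rpow (by positivity) hkr (by linarith : (0:ℝ) ≤ D - 1)
          have h2δ : (0 : ℝ) < (2 : ℝ) ^ δ := Real.rpow_pos_of_pos (by norm_num) δ
          have h2 : c * ((r : ℝ) / 4) ^ (D - 1) ≤ c * (k : ℝ) ^ (D - 1) :=
            mul_le_mul_of_nonneg_left h1 hc.le
          exact (div_le_div_iff_of_pos_right h2δ).mpr h2
      _ ≤ c * (ρ k : ℝ) ^ δ := by
          have h2δ : (0 : ℝ) < (2 : ℝ) ^ δ := Real.rpow_pos_of_pos (by norm_num) δ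
          rw [div_le_iff₀ h2δ]
          have hk0 : (0 : ℝ) ≤ (k : ℝ) := by positivity
          calc c * (k : ℝ) ^ (D - 1) = c * ((k : ℝ) ^ α) ^ δ := by
                rw [← hαδ, Real.rpow_mul hk0]
            _ ≤ c * (2 * (ρ k : ℝ)) ^ δ := mul_le_mul_of_nonneg_left
                (Real.rpow_le_rpow (by positivity) hx2 hδ0.le) hc.le
            _ = c * (ρ k : ℝ) ^ δ * 2 ^ δ := by
                rw [Real.mul_rpow (by norm_num) (by positivity)]; ring
      _ ≤ ((gball (P (n + k)) (o (n + k)) (ρ k)).ncard : ℝ) := hA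
      _ ≤ ((T k).card : ℝ) := by exact_mod_cast hcard
  -- final assembly
  have hdisj : ∀ x ∈ Finset.Ioc K2 K, ∀ y ∈ Finset.Ioc K2 K, x ≠ y → Disjoint (T x) (T y) := by
    intro x _ y _ hxy
    rw [Finset.disjoint_left]
    intro p hpx hpy
    simp only [hT, Finset.mem_filter] at hpx hpy
    omega
  have hsub : (Finset.Ioc K2 K).biUnion T ⊆ FB := by
    intro p hp
    simp only [Finset.mem_biUnion, hT, Finset.mem_filter] at hp
    obtain ⟨k, _, hp2, _⟩ := hp
    exact hp2
  have hcount : ∑ k ∈ Finset.Ioc K2 K, (T k).card ≤ FB.card := by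
    rw [← Finset.card_biUnion hdisj]
    exact Finset.card_le_card hsub
  have h2δ : (0 : ℝ) < 2 ^ δ := Real.rpow_pos_of_pos (by norm_num) δ
  have hconst0 : (0 : ℝ) ≤ c * ((r : ℝ) / 4) ^ (D - 1) / 2 ^ δ := by positivity
  have hsum1 : ((Finset.Ioc K2 K).card : ℝ) * (c * ((r : ℝ) / 4) ^ (D - 1) / 2 ^ δ)
      ≤ (FB.card : ℝ) := by
    calc ((Finset.Ioc K2 K).card : ℝ) * (c * ((r : ℝ) / 4) ^ (D - 1) / 2 ^ δ)
        = ∑ _k ∈ Finset.Ioc K2 K, (c * ((r : ℝ) / 4) ^ (D - 1) / 2 ^ δ) := by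
          rw [Finset.sum_const, nsmul_eq_mul]
      _ ≤ ∑ k ∈ Finset.Ioc K2 K, ((T k).card : ℝ) := Finset.sum_le_sum hk_facts
      _ = ((∑ k ∈ Finset.Ioc K2 K, (T k).card : ℕ) : ℝ) := by push_cast; ring
      _ ≤ (FB.card : ℝ) := by exact_mod_cast hcount
  have hIoc : (Finset.Ioc K2 K).card = K - K2 := Nat.card_Ioc K2 K
  have hKK2 : (r : ℝ) / 8 ≤ ((K - K2 : ℕ) : ℝ) := by
    have hnat : r ≤ 8 * (K - K2) := by omega
    have h8 : (r : ℝ) ≤ 8 * ((K - K2 : ℕ) : ℝ) := by exact_mod_cast hnat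
    linarith
  have hncard : ((gball G ctr (r : ℝ)).ncard : ℝ) = (FB.card : ℝ) := by
    rw [Set.ncard_eq_toFinset_card _ hBfin]
  rw [hncard]
  have hr0 : (0 : ℝ) < (r : ℝ) := by exact_mod_cast (by omega : 0 < r)
  have hrD : (r : ℝ) ^ D = (r : ℝ) * (r : ℝ) ^ (D - 1) := by
    have h := Real.rpow_add hr0 1 (D - 1)
    rw [Real.rpow_one] at h
    rw [show (1 : ℝ) + (D - 1) = D by ring] at h
    exact h
  have hdiv4 : ((r : ℝ) / 4) ^ (D - 1) = (r : ℝ) ^ (D - 1) / 4 ^ (D - 1) :=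
    Real.div_rpow (by positivity) (by norm_num) (D - 1)
  have h4 : (0 : ℝ) < (4 : ℝ) ^ (D - 1) := Real.rpow_pos_of_pos (by norm_num) _
  have hid : c / (8 * 2 ^ δ * 4 ^ (D - 1)) * (r : ℝ) ^ D
      = ((r : ℝ) / 8) * (c * ((r : ℝ) / 4) ^ (D - 1) / 2 ^ δ) := by
    rw [hrD, hdiv4]
    field_simp
  rw [hid]
  calc ((r : ℝ) / 8) * (c * ((r : ℝ) / 4) ^ (D - 1) / 2 ^ δ)
      ≤ ((K - K2 : ℕ) : ℝ) * (c * ((r : ℝ) / 4) ^ (D - 1) / 2 ^ δ) :=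
        mul_le_mul_of_nonneg_right hKK2 hconst0
    _ = ((Finset.Ioc K2 K).card : ℝ) * (c * ((r : ℝ) / 4) ^ (D - 1) / 2 ^ δ) := by rw [hIoc]
    _ ≤ (FB.card : ℝ) := hsum1

theorem stmt_17 {W : ℕ → Type*} (P : ∀ n, SimpleGraph (W n)) (o : ∀ n, W n)
    (hconn : ∀ n, (P n).Connected)
    (δ D α : ℝ) (hD : 1 < D) (hδ : D < δ) (hα : α = (D - 1) / δ)
    (c C : ℝ) (hc : 0 < c) (hC : 0 < C)
    (hvol : ∀ (n : ℕ) (x : W n) (r : ℕ), 1 ≤ r →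
      c * (r : ℝ) ^ δ ≤ ((gball (P n) x r).ncard : ℝ) ∧
        ((gball (P n) x r).ncard : ℝ) ≤ C * (r : ℝ) ^ δ) :
    ∃ c' : ℝ, 0 < c' ∧ ∀ (n : ℕ) (r : ℕ), 2 ≤ r →
      c' * (r : ℝ) ^ D ≤
        ((gball (SpineGlued P o α)
            ⟨n, ⟨o n, by simp [SimpleGraph.dist_self]; positivity⟩⟩ (r : ℝ)).ncard : ℝ) := by
  refine ⟨c / (8 * 2 ^ δ * 4 ^ (D - 1)), ?_, ?_⟩
  · have h1 : (0 : ℝ) < 2 ^ δ := Real.rpow_pos_of_pos (by norm_num) δ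
    have h2 : (0 : ℝ) < 4 ^ (D - 1) := Real.rpow_pos_of_pos (by norm_num) _
    positivity
  · exact key P o hconn δ D α hD hδ hα c hc (fun m x r hr => (hvol m x r hr).1)
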